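/- Let a(n) = (6n)!/((3n)!(2n)!) and b(n) = ((6n+1)/(6n-1)) * (6n)!/((3n)!(2n)!) as rational numbers. Then for every even natural number n ≥ 2, Σ_{i+j=n} (-1)^i * a(i) * b(j) = 0. -/

import Mathlib

/-- `a n = (6n)! / ((3n)! (2n)!)`, as a rational number. -/
noncomputable def pixtonA (n : ℕ) : ℚ :=
  (Nat.factorial (6 * n) : ℚ) / ((Nat.factorial (3 * n) : ℚ) * (Nat.factorial (2 * n) : ℚ))

/-- `b n = ((6n+1)/(6n-1)) * a n`. -/
noncomputable def pixtonB (n : ℕ) : ℚ :=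
  ((6 * (n : ℚ) + 1) / (6 * (n : ℚ) - 1)) * pixtonA n

lemma pixtonA_pos (n : ℕ) : 0 < pixtonA n := by
  unfold pixtonA
  positivity

lemma cast_six_sub_one_ne (j : ℕ) : 6 * (j : ℚ) - 1 ≠ 0 := by
  intro h
  have h2 : ((6 * j : ℕ) : ℚ) = ((1 : ℕ) : ℚ) := by push_cast; linarith
  have := Nat.cast_injective h2
  omega

lemma cast_six_sub_seven_ne (j : ℕ) : 6 * (j : ℚ) - 7 ≠ 0 := by
  intro h
  have h2 : ((6 * j : ℕ) : ℚ) = ((7 : ℕ) : ℚ) := by push_cast; linarith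
  have := Nat.cast_injective h2
  omega

lemma pixtonA_succ (i : ℕ) :
    ((i : ℚ) + 1) * pixtonA (i + 1) = 12 * (6 * (i : ℚ) + 5) * (6 * (i : ℚ) + 1) * pixtonA i := by
  have h6 : (6 * (i + 1)).factorial =
      (6*i+6)*((6*i+5)*((6*i+4)*((6*i+3)*((6*i+2)*((6*i+1)*(6*i).factorial))))) := by
    rw [show 6 * (i + 1) = 6*i+1+1+1+1+1+1 by ring]
    simp [Nat.factorial_succ]
  have h3 : (3 * (i + 1)).factorial = (3*i+3)*((3*i+2)*((3*i+1)*(3*i).factorial)) := by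
    rw [show 3 * (i + 1) = 3*i+1+1+1 by ring]
    simp [Nat.factorial_succ]
  have h2 : (2 * (i + 1)).factorial = (2*i+2)*((2*i+1)*(2*i).factorial) := by
    rw [show 2 * (i + 1) = 2*i+1+1 by ring]
    simp [Nat.factorial_succ]
  unfold pixtonA
  rw [h6, h3, h2]
  have n6 : ((6*i).factorial : ℚ) ≠ 0 := Nat.cast_ne_zero.2 (Nat.factorial_ne_zero _)
  have n3 : ((3*i).factorial : ℚ) ≠ 0 := Nat.cast_ne_zero.2 (Nat.factorial_ne_zero _)
  have n2 : ((2*i).factorial : ℚ) ≠ 0 := Nat.cast_ne_zero.2 (Nat.factorial_ne_zero _)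
  have hi : (0:ℚ) ≤ (i:ℚ) := Nat.cast_nonneg i
  push_cast
  field_simp
  ring

lemma pixtonB_succ (j : ℕ) :
    ((j : ℚ) + 1) * pixtonB (j + 1) = 12 * (6 * (j : ℚ) + 7) * (6 * (j : ℚ) - 1) * pixtonB j := by
  have hA := pixtonA_succ j
  have h1 : 6 * ((j:ℚ) + 1) + 1 = 6 * (j:ℚ) + 7 := by ring
  have h2 : 6 * ((j:ℚ) + 1) - 1 = 6 * (j:ℚ) + 5 := by ring
  have hj : (0:ℚ) ≤ (j:ℚ) := Nat.cast_nonneg j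
  have n1 : 6 * (j:ℚ) + 5 ≠ 0 := by positivity
  have n2 : 6 * (j:ℚ) - 1 ≠ 0 := cast_six_sub_one_ne j
  unfold pixtonB
  push_cast
  rw [h1, h2]
  field_simp
  rw [hA]
  field_simp

/-- The Zeilberger certificate term. -/
noncomputable def pG (n i j : ℕ) : ℚ :=
  (-1) ^ i * pixtonA i * pixtonB j *
    ((i : ℚ) * (216 * ((n : ℚ) + 1) * (i : ℚ) ^ 2 - 72 * (3 * (n : ℚ) + 4) ^ 2 * (i : ℚ)
        + (432 * (n : ℚ) ^ 3 + 1944 * (n : ℚ) ^ 2 + 2922 * (n : ℚ) + 1482))) /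
    (6 * ((n : ℚ) + 2) * (6 * (j : ℚ) + 1) * (6 * (j : ℚ) - 7))

lemma pixtonA_succ' (i : ℕ) :
    pixtonA (i + 1) = 12 * (6 * (i : ℚ) + 5) * (6 * (i : ℚ) + 1) / ((i : ℚ) + 1) * pixtonA i := by
  have h := pixtonA_succ i
  have hi : ((i : ℚ) + 1) ≠ 0 := by positivity
  field_simp
  linarith [h]

lemma pixtonB_succ' (j : ℕ) :
    pixtonB (j + 1) = 12 * (6 * (j : ℚ) + 7) * (6 * (j : ℚ) - 1) / ((j : ℚ) + 1) * pixtonB j := by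
  have h := pixtonB_succ j
  have hj : ((j : ℚ) + 1) ≠ 0 := by positivity
  field_simp
  linarith [h]

lemma step_int (n i j : ℕ) (hij : i + j = n) :
    ((n : ℚ) + 1) * ((-1) ^ i * pixtonA i * pixtonB (j + 2))
      - 20736 * (n : ℚ) * (3 * (n : ℚ) + 2) * (3 * (n : ℚ) + 4)
        * ((-1) ^ i * pixtonA i * pixtonB j)
    = pG n (i + 1) (j + 1) - pG n i (j + 2) := by
  have hn : (n : ℚ) = (i : ℚ) + (j : ℚ) := by exact_mod_cast congrArg (Nat.cast (R := ℚ)) hij.symm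
  have hA := pixtonA_succ' i
  have hB1 := pixtonB_succ' j
  have hB2 := pixtonB_succ' (j + 1)
  have hx : (0:ℚ) ≤ (i : ℚ) := Nat.cast_nonneg i
  have hy : (0:ℚ) ≤ (j : ℚ) := Nat.cast_nonneg j
  have e1 : (0:ℚ) < (i : ℚ) + 1 := by linarith
  have e2 : (0:ℚ) < (j : ℚ) + 1 := by linarith
  have e3 : (0:ℚ) < (j : ℚ) + 2 := by linarith
  have e4 : (0:ℚ) < (i : ℚ) + (j : ℚ) + 2 := by linarith
  have e5 : (0:ℚ) < 6 * ((j:ℚ) + 1) + 1 := by linarith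
  have e6 : (0:ℚ) < 6 * ((j:ℚ) + 2) + 1 := by linarith
  have e7 : (0:ℚ) < 6 * ((j:ℚ) + 2) - 7 := by linarith
  have e8 : 6 * ((j:ℚ) + 1) - 7 ≠ 0 := by
    have := cast_six_sub_one_ne j
    intro h; apply this; linarith
  unfold pG
  rw [hB2, hB1, hA, hn]
  push_cast
  field_simp
  ring

lemma pixtonA_zero : pixtonA 0 = 1 := by
  unfold pixtonA
  norm_num [Nat.factorial]

lemma pixtonB_zero : pixtonB 0 = -1 := by
  unfold pixtonB
  rw [pixtonA_zero]
  norm_num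

lemma pixtonB_one : pixtonB 1 = 84 := by
  have h := pixtonB_succ 0
  rw [pixtonB_zero] at h
  push_cast at h
  linarith

lemma step_b2 (n : ℕ) :
    ((n : ℚ) + 1) * ((-1) ^ (n + 2) * pixtonA (n + 2) * pixtonB 0)
      = 0 - pG n (n + 2) 0 := by
  unfold pG
  rw [pixtonB_zero]
  have e4 : (0:ℚ) < (n : ℚ) + 2 := by positivity
  push_cast
  field_simp
  ring

lemma step_b1 (n : ℕ) :
    ((n : ℚ) + 1) * ((-1) ^ (n + 1) * pixtonA (n + 1) * pixtonB 1)
      = pG n (n + 2) 0 - pG n (n + 1) 1 := by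
  have hA : pixtonA (n + 1 + 1)
      = 12 * (6 * ((n:ℚ)+1) + 5) * (6 * ((n:ℚ)+1) + 1) / (((n:ℚ)+1) + 1) * pixtonA (n+1) := by
    have h := pixtonA_succ' (n + 1)
    push_cast at h ⊢
    exact h
  unfold pG
  rw [show n + 2 = n + 1 + 1 from rfl, hA, pixtonB_zero, pixtonB_one]
  have e4 : (0:ℚ) < (n : ℚ) + 2 := by positivity
  have e5 : (0:ℚ) < (n : ℚ) + 1 + 1 := by positivity
  push_cast
  field_simp
  ring

lemma pG_zero_left (n j : ℕ) : pG n 0 j = 0 := by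
  unfold pG
  norm_num

lemma recurrence (n : ℕ) :
    ((n : ℚ) + 1) * (∑ i ∈ Finset.range (n + 3), (-1 : ℚ) ^ i * pixtonA i * pixtonB (n + 2 - i))
      = 20736 * (n : ℚ) * (3 * (n : ℚ) + 2) * (3 * (n : ℚ) + 4)
        * (∑ i ∈ Finset.range (n + 1), (-1 : ℚ) ^ i * pixtonA i * pixtonB (n - i)) := by
  set K : ℚ := 20736 * (n : ℚ) * (3 * (n : ℚ) + 2) * (3 * (n : ℚ) + 4) with hK
  set Gf : ℕ → ℚ := fun i => if i ≤ n + 2 then pG n i (n + 2 - i) else 0 with hGf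
  have key : ∀ i ∈ Finset.range (n + 3),
      ((n : ℚ) + 1) * ((-1 : ℚ) ^ i * pixtonA i * pixtonB (n + 2 - i))
        - (if i ≤ n then K * ((-1 : ℚ) ^ i * pixtonA i * pixtonB (n - i)) else 0)
      = Gf (i + 1) - Gf i := by
    intro i hi
    simp only [Finset.mem_range] at hi
    by_cases h : i ≤ n
    · set j := n - i with hj
      have hij : i + j = n := by omega
      have d1 : n + 2 - i = j + 2 := by omega
      have d2 : n + 2 - (i + 1) = j + 1 := by omega
      have c1 : i + 1 ≤ n + 2 := by omega
      have c2 : i ≤ n + 2 := by omega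
      simp only [hGf, if_pos h, if_pos c1, if_pos c2, d1, d2]
      exact step_int n i j hij
    · by_cases h2 : i = n + 1
      · subst h2
        have c1 : n + 1 + 1 ≤ n + 2 := by omega
        have c2 : n + 1 ≤ n + 2 := by omega
        simp only [hGf, if_neg h, if_pos c1, if_pos c2,
          show n + 2 - (n + 1 + 1) = 0 from by omega, show n + 2 - (n + 1) = 1 from by omega]
        rw [sub_zero, show n + 1 + 1 = n + 2 from rfl]
        exact step_b1 n
      · have h3 : i = n + 2 := by omega
        subst h3
        simp only [hGf, if_neg h, if_pos (le_refl (n + 2)),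
          if_neg (show ¬ n + 2 + 1 ≤ n + 2 from by omega),
          show n + 2 - (n + 2) = 0 from by omega]
        rw [sub_zero]
        exact step_b2 n
  have tele : ∑ i ∈ Finset.range (n + 3),
      (((n : ℚ) + 1) * ((-1 : ℚ) ^ i * pixtonA i * pixtonB (n + 2 - i))
        - (if i ≤ n then K * ((-1 : ℚ) ^ i * pixtonA i * pixtonB (n - i)) else 0))
      = Gf (n + 3) - Gf 0 := by
    rw [Finset.sum_congr rfl key]
    exact Finset.sum_range_sub Gf (n + 3)
  have hG0 : Gf 0 = 0 := by
    simp only [hGf, if_pos (show 0 ≤ n + 2 from by omega)]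
    exact pG_zero_left n (n + 2 - 0)
  have hGtop : Gf (n + 3) = 0 := by
    simp only [hGf, if_neg (show ¬ n + 3 ≤ n + 2 from by omega)]
  rw [Finset.sum_sub_distrib] at tele
  have hsecond : ∑ i ∈ Finset.range (n + 3),
      (if i ≤ n then K * ((-1 : ℚ) ^ i * pixtonA i * pixtonB (n - i)) else 0)
      = ∑ i ∈ Finset.range (n + 1), K * ((-1 : ℚ) ^ i * pixtonA i * pixtonB (n - i)) := by
    rw [← Finset.sum_subset (Finset.range_subset_range.2 (show n + 1 ≤ n + 3 from by omega))]
    · apply Finset.sum_congr rfl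
      intro i hi
      simp only [Finset.mem_range] at hi
      rw [if_pos (by omega)]
    · intro x _ hx
      simp only [Finset.mem_range] at hx
      rw [if_neg (by omega)]
  rw [hsecond, hG0, hGtop, ← Finset.mul_sum, ← Finset.mul_sum] at tele
  linarith [tele]

theorem pixton_convolution_vanishes (n : ℕ) (hn : 2 ≤ n) (heven : Even n) :
    ∑ i ∈ Finset.range (n + 1), (-1 : ℚ) ^ i * pixtonA i * pixtonB (n - i) = 0 := by
  obtain ⟨r, hr⟩ := heven
  obtain ⟨k, hk⟩ : ∃ k, n = 2 * k + 2 := ⟨r - 1, by omega⟩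
  clear hr hn
  subst hk
  induction k with
  | zero =>
    norm_num [Finset.sum_range_succ, pixtonA, pixtonB, Nat.factorial]
  | succ k ih =>
    have hrec := recurrence (2 * k + 2)
    rw [ih] at hrec
    have h0 : ((2 * k + 2 : ℕ) : ℚ) + 1 ≠ 0 := by positivity
    have hs : ∑ i ∈ Finset.range (2 * k + 2 + 3), (-1 : ℚ) ^ i * pixtonA i * pixtonB (2 * k + 2 + 2 - i) = 0 := by
      have := hrec
      rw [mul_zero] at this
      exact (mul_eq_zero.1 this).resolve_left h0
    have e : 2 * (k + 1) + 2 = 2 * k + 2 + 2 := by ring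
    rw [show 2 * (k + 1) + 2 + 1 = 2 * k + 2 + 3 from by ring, e]
    exact hs
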